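/- Let ε ∈ (0,1) and α > 0. Let Y be a square-integrable real random variable with mean 1 and standard deviation at most α, and let R be uniform on [1−ε, 1+ε], independent of Y. Then there exists a random variable W taking exactly two values with probability 1, with mean 1 and standard deviation exactly α, and independent of R, such that P(WR ≤ 1+ε) ≤ P(YR ≤ 1+ε). -/

import Mathlib

open MeasureTheory ProbabilityTheory Real

/-- The uniform probability measure on the interval `[a, b]`. -/
noncomputable def uniformIcc (a b : ℝ) : Measure ℝ :=
  (ENNReal.ofReal (b - a))⁻¹ • (MeasureTheory.volume.restrict (Set.Icc a b))

/-- The median of `2*n+1` real values: their `(n+1)`-st smallest value. -/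
noncomputable def medianOf {n : ℕ} (v : Fin (2 * n + 1) → ℝ) : ℝ :=
  (Multiset.sort (↑(List.ofFn v)) (· ≤ ·)).get ⟨n, by simp; omega⟩

/-- The nuisance factor `f(ε) = (1+ε)/((1-ε)² (1+ε-ε²))`. -/
noncomputable def nuisance (ε : ℝ) : ℝ := (1 + ε) / ((1 - ε) ^ 2 * (1 + ε - ε ^ 2))

set_option maxHeartbeats 1000000
lemma uniformIcc_apply (a b : ℝ) (s : Set ℝ) :
    uniformIcc a b s = (ENNReal.ofReal (b - a))⁻¹ * volume (s ∩ Set.Icc a b) := by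
  simp [uniformIcc, Measure.restrict_apply₀', Measure.restrict_apply']

lemma uniformIcc_prob {a b : ℝ} (h : a < b) : IsProbabilityMeasure (uniformIcc a b) := by
  constructor
  rw [uniformIcc]
  simp [Real.volume_Icc]
  rw [ENNReal.inv_mul_cancel] <;> simp [h, sub_pos.2 h, ne_of_gt]

noncomputable def muW (p q w₁ w₂ : ℝ) : Measure ℝ :=
  ENNReal.ofReal p • Measure.dirac w₁ + ENNReal.ofReal q • Measure.dirac w₂

lemma muW_prob {p q : ℝ} (w₁ w₂ : ℝ) (hp : 0 ≤ p) (hq : 0 ≤ q) (hpq : p + q = 1) :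
    IsProbabilityMeasure (muW p q w₁ w₂) := by
  constructor
  simp [muW, ← ENNReal.ofReal_add hp hq, hpq]

lemma muW_lint (p q w₁ w₂ : ℝ) (f : ℝ → ENNReal) :
    ∫⁻ x, f x ∂(muW p q w₁ w₂) = ENNReal.ofReal p * f w₁ + ENNReal.ofReal q * f w₂ := by
  simp [muW, lintegral_add_measure, lintegral_smul_measure, lintegral_dirac]

lemma muW_apply (p q w₁ w₂ : ℝ) (s : Set ℝ) (hs : MeasurableSet s) :
    muW p q w₁ w₂ s = ENNReal.ofReal p * s.indicator 1 w₁ + ENNReal.ofReal q * s.indicator 1 w₂ := by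
  simp [muW, Measure.dirac_apply' _ hs]

lemma muW_integral (p q w₁ w₂ : ℝ) (hp : 0 ≤ p) (hq : 0 ≤ q) (f : ℝ → ℝ) :
    ∫ x, f x ∂(muW p q w₁ w₂) = p * f w₁ + q * f w₂ := by
  rw [muW, integral_add_measure, integral_smul_measure, integral_smul_measure,
    integral_dirac, integral_dirac]
  · simp [ENNReal.toReal_ofReal hp, ENNReal.toReal_ofReal hq, smul_eq_mul]
  · exact (((integrable_const (f w₁)).congr (ae_eq_dirac f).symm).smul_measure
      ENNReal.ofReal_ne_top)
  · exact (((integrable_const (f w₂)).congr (ae_eq_dirac f).symm).smul_measure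
      ENNReal.ofReal_ne_top)

/-- key construction lemma -/
lemma construction {Ω : Type*} [MeasureSpace Ω]
    [IsProbabilityMeasure (ℙ : Measure Ω)]
    (ε α : ℝ) (hε : ε ∈ Set.Ioo (0 : ℝ) 1) (hα : 0 < α)
    (Y R : Ω → ℝ) (hYm : Measurable Y) (hRm : Measurable R)
    (hY2 : MemLp Y 2 ℙ)
    (hmean : ∫ ω, Y ω ∂ℙ = 1)
    (hsd : Real.sqrt (variance Y ℙ) ≤ α)
    (hR : Measure.map R ℙ = uniformIcc (1 - ε) (1 + ε))
    (hindep : IndepFun Y R ℙ)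
    (w₁ w₂ p q lam : ℝ)
    (hw₁ : w₁ ≤ 1) (hw₂ : 1 < w₂) (hw₂c : w₂ * (1 - ε) ≤ 1 + ε)
    (hp : 0 < p) (hq : 0 < q) (hpq : p + q = 1)
    (hWmean : p * w₁ + q * w₂ = 1)
    (hWvar : p * (w₁ - 1)^2 + q * (w₂ - 1)^2 = α^2)
    (hlam : 0 < lam)
    (hkey : ∀ y : ℝ, 1 < y → min 1 ((1 + ε) * (y - 1) / (2 * ε * y)) ≤ lam * (y - w₁)^2)
    (hbal : p + q * (((1 + ε) / w₂ - (1 - ε)) / (2 * ε)) + lam * ((1 - w₁)^2 + α^2) = 1) :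
    ∃ (Ω' : Type) (_ : MeasureSpace Ω'),
      IsProbabilityMeasure (ℙ : Measure Ω') ∧
      ∃ W R' : Ω' → ℝ,
        Measurable W ∧ Measurable R' ∧
        Measure.map R' (ℙ : Measure Ω') = uniformIcc (1 - ε) (1 + ε) ∧
        IndepFun W R' ℙ ∧
        (∃ w₁ w₂ : ℝ, w₁ ≠ w₂ ∧
          (ℙ : Measure Ω') {ω | W ω = w₁ ∨ W ω = w₂} = 1 ∧
          (ℙ : Measure Ω') {ω | W ω = w₁} ≠ 0 ∧
          (ℙ : Measure Ω') {ω | W ω = w₂} ≠ 0) ∧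
        (∫ ω, W ω ∂(ℙ : Measure Ω')) = 1 ∧
        Real.sqrt (variance W (ℙ : Measure Ω')) = α ∧
        (ℙ : Measure Ω') {ω | W ω * R' ω ≤ 1 + ε} ≤ ℙ {ω | Y ω * R ω ≤ 1 + ε} := by
  obtain ⟨hε0, hε1⟩ := hε
  have h2ε : (0:ℝ) < 2 * ε := by linarith
  have hab : (1:ℝ) - ε < 1 + ε := by linarith
  have hRprob : IsProbabilityMeasure (uniformIcc (1 - ε) (1 + ε)) := uniformIcc_prob hab
  set ν := uniformIcc (1 - ε) (1 + ε) with hν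
  set μW := muW p q w₁ w₂ with hμW
  have hWprob : IsProbabilityMeasure μW := muW_prob w₁ w₂ hp.le hq.le hpq
  have hw₂0 : (0:ℝ) < w₂ := by linarith
  have ht1 : (1:ℝ) - ε ≤ (1 + ε) / w₂ := by
    rw [le_div_iff₀ hw₂0]; linarith [hw₂c]
  have ht2 : (1 + ε) / w₂ ≤ 1 + ε := by
    rw [div_le_iff₀ hw₂0]; nlinarith
  have hG0 : 0 ≤ ((1 + ε) / w₂ - (1 - ε)) / (2 * ε) := div_nonneg (by linarith) h2ε.le
  refine ⟨ℝ × ℝ, ⟨μW.prod ν⟩, ?_, Prod.fst, Prod.snd, measurable_fst, measurable_snd, ?_, ?_, ?_, ?_, ?_, ?_⟩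
  · show IsProbabilityMeasure (μW.prod ν); infer_instance
  · show Measure.map Prod.snd (μW.prod ν) = ν
    rw [Measure.map_snd_prod]; simp
  · show IndepFun Prod.fst Prod.snd (μW.prod ν)
    rw [indepFun_iff_map_prod_eq_prod_map_map measurable_fst.aemeasurable
      measurable_snd.aemeasurable]
    simp only [Measure.map_fst_prod, Measure.map_snd_prod]
    simp [Measure.map_id']
  · -- two valued
    have hne : w₁ ≠ w₂ := by intro h; rw [h] at hw₁; linarith
    refine ⟨w₁, w₂, hne, ?_, ?_, ?_⟩
    · show (μW.prod ν) {ω : ℝ × ℝ | ω.1 = w₁ ∨ ω.1 = w₂} = 1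
      have hset : {ω : ℝ × ℝ | ω.1 = w₁ ∨ ω.1 = w₂} = Prod.fst ⁻¹' {w₁, w₂} := by
        ext ω; simp [Set.mem_preimage]
      rw [hset, ← Measure.map_apply measurable_fst
          ((measurableSet_singleton w₂).insert w₁), Measure.map_fst_prod]
      simp only [measure_univ, one_smul]
      rw [muW_apply _ _ _ _ _ ((measurableSet_singleton w₂).insert w₁)]
      simp [Set.indicator_of_mem, ← ENNReal.ofReal_add hp.le hq.le, hpq]
    · show (μW.prod ν) {ω : ℝ × ℝ | ω.1 = w₁} ≠ 0
      have hset : {ω : ℝ × ℝ | ω.1 = w₁} = Prod.fst ⁻¹' {w₁} := rfl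
      rw [hset, ← Measure.map_apply measurable_fst (measurableSet_singleton w₁),
        Measure.map_fst_prod]
      simp only [measure_univ, one_smul]
      rw [muW_apply _ _ _ _ _ (measurableSet_singleton w₁)]
      simp [Set.indicator_apply, hne, hne.symm, ENNReal.ofReal_eq_zero, not_le, hp]
    · show (μW.prod ν) {ω : ℝ × ℝ | ω.1 = w₂} ≠ 0
      have hset : {ω : ℝ × ℝ | ω.1 = w₂} = Prod.fst ⁻¹' {w₂} := rfl
      rw [hset, ← Measure.map_apply measurable_fst (measurableSet_singleton w₂),
        Measure.map_fst_prod]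
      simp only [measure_univ, one_smul]
      rw [muW_apply _ _ _ _ _ (measurableSet_singleton w₂)]
      simp [Set.indicator_apply, hne, hne.symm, ENNReal.ofReal_eq_zero, not_le, hq]
  · -- mean
    show ∫ ω : ℝ × ℝ, ω.1 ∂(μW.prod ν) = 1
    have : ∫ x, x ∂(Measure.map Prod.fst (μW.prod ν)) = ∫ ω : ℝ × ℝ, ω.1 ∂(μW.prod ν) :=
      integral_map measurable_fst.aemeasurable aestronglyMeasurable_id
    rw [← this, Measure.map_fst_prod]
    simp only [measure_univ, one_smul]
    rw [muW_integral _ _ _ _ hp.le hq.le (fun x => x)]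
    exact hWmean
  · -- sd
    show Real.sqrt (variance Prod.fst (μW.prod ν)) = α
    have hfull : (μW.prod ν) (Prod.fst ⁻¹' {w₁, w₂}) = 1 := by
      rw [← Measure.map_apply measurable_fst ((measurableSet_singleton w₂).insert w₁),
        Measure.map_fst_prod]
      simp only [measure_univ, one_smul]
      rw [muW_apply _ _ _ _ _ ((measurableSet_singleton w₂).insert w₁)]
      simp [Set.indicator_of_mem, ← ENNReal.ofReal_add hp.le hq.le, hpq]
    have hae : ∀ᵐ ω : ℝ × ℝ ∂(μW.prod ν), ω.1 = w₁ ∨ ω.1 = w₂ := by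
      rw [ae_iff]
      have : {ω : ℝ × ℝ | ¬(ω.1 = w₁ ∨ ω.1 = w₂)} = (Prod.fst ⁻¹' {w₁, w₂})ᶜ := by
        ext ω; simp [Set.mem_preimage]
      rw [this, measure_compl (measurable_fst ((measurableSet_singleton w₂).insert w₁))
        (measure_ne_top _ _), hfull, measure_univ, tsub_self]
    have hmem : MemLp (Prod.fst : ℝ × ℝ → ℝ) 2 (μW.prod ν) := by
      refine MemLp.of_bound measurable_fst.aestronglyMeasurable (max |w₁| |w₂|) ?_
      filter_upwards [hae] with ω hω
      rcases hω with h | h <;> rw [h] <;> simp [le_max_left, le_max_right, Real.norm_eq_abs]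
    have hmean1 : ∫ ω : ℝ × ℝ, ω.1 ∂(μW.prod ν) = 1 := by
      have : ∫ x, x ∂(Measure.map Prod.fst (μW.prod ν)) = ∫ ω : ℝ × ℝ, ω.1 ∂(μW.prod ν) :=
        integral_map measurable_fst.aemeasurable aestronglyMeasurable_id
      rw [← this, Measure.map_fst_prod]
      simp only [measure_univ, one_smul]
      rw [muW_integral _ _ _ _ hp.le hq.le (fun x => x)]
      exact hWmean
    have hsq : ∫ ω : ℝ × ℝ, ω.1 ^ 2 ∂(μW.prod ν) = p * w₁ ^ 2 + q * w₂ ^ 2 := by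
      have : ∫ x, x ^ 2 ∂(Measure.map Prod.fst (μW.prod ν))
          = ∫ ω : ℝ × ℝ, ω.1 ^ 2 ∂(μW.prod ν) :=
        integral_map measurable_fst.aemeasurable
          (measurable_id.pow_const 2).aestronglyMeasurable
      rw [← this, Measure.map_fst_prod]
      simp only [measure_univ, one_smul]
      rw [muW_integral _ _ _ _ hp.le hq.le (fun x => x ^ 2)]
    have hvar : variance Prod.fst (μW.prod ν) = α ^ 2 := by
      rw [variance_eq_sub hmem]
      have : ∫ ω : ℝ × ℝ, ((Prod.fst : ℝ × ℝ → ℝ) ^ 2) ω ∂(μW.prod ν)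
          = ∫ ω : ℝ × ℝ, ω.1 ^ 2 ∂(μW.prod ν) := by
        apply integral_congr_ae; filter_upwards with ω; simp
      rw [this, hsq, hmean1]
      nlinarith [hWmean, hWvar, hpq]
    rw [hvar, Real.sqrt_sq hα.le]
  · -- main inequality
    show (μW.prod ν) {ω : ℝ × ℝ | ω.1 * ω.2 ≤ 1 + ε} ≤ ℙ {ω | Y ω * R ω ≤ 1 + ε}
    -- LHS computation
    have hms : MeasurableSet {ω : ℝ × ℝ | ω.1 * ω.2 ≤ 1 + ε} :=
      measurableSet_le (measurable_fst.mul measurable_snd) measurable_const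
    have hslice1 : ν {r : ℝ | w₁ * r ≤ 1 + ε} = 1 := by
      rw [hν, uniformIcc_apply]
      have : {r : ℝ | w₁ * r ≤ 1 + ε} ∩ Set.Icc (1 - ε) (1 + ε) = Set.Icc (1 - ε) (1 + ε) := by
        apply Set.inter_eq_right.2
        intro r hr
        simp only [Set.mem_Icc] at hr
        simp only [Set.mem_setOf_eq]
        rcases le_total w₁ 0 with h | h
        · nlinarith
        · nlinarith
      rw [this, Real.volume_Icc]
      rw [show (1 + ε - (1 - ε)) = 2 * ε by ring, ENNReal.inv_mul_cancel] <;>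
        simp [h2ε, ne_of_gt, ENNReal.ofReal_pos, ENNReal.mul_eq_top, hε0]
    have hslice2 : ν {r : ℝ | w₂ * r ≤ 1 + ε}
        = ENNReal.ofReal (((1 + ε) / w₂ - (1 - ε)) / (2 * ε)) := by
      rw [hν, uniformIcc_apply]
      have hset : {r : ℝ | w₂ * r ≤ 1 + ε} ∩ Set.Icc (1 - ε) (1 + ε)
          = Set.Icc (1 - ε) ((1 + ε) / w₂) := by
        ext r
        simp only [Set.mem_inter_iff, Set.mem_setOf_eq, Set.mem_Icc]
        constructor
        · rintro ⟨h1, h2, h3⟩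
          exact ⟨h2, by rw [le_div_iff₀ hw₂0]; linarith⟩
        · rintro ⟨h1, h2⟩
          rw [le_div_iff₀ hw₂0] at h2
          refine ⟨by linarith, h1, ?_⟩
          nlinarith
      rw [hset, Real.volume_Icc, ENNReal.ofReal_div_of_pos h2ε, ENNReal.div_eq_inv_mul]
      ring_nf
    have hLHS : (μW.prod ν) {ω : ℝ × ℝ | ω.1 * ω.2 ≤ 1 + ε}
        = ENNReal.ofReal (p + q * (((1 + ε) / w₂ - (1 - ε)) / (2 * ε))) := by
      rw [Measure.prod_apply hms]
      have : ∀ x : ℝ, (Prod.mk x ⁻¹' {ω : ℝ × ℝ | ω.1 * ω.2 ≤ 1 + ε}) = {r : ℝ | x * r ≤ 1 + ε} := by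
        intro x; rfl
      simp_rw [this]
      rw [muW_lint p q w₁ w₂ (fun x => ν {r : ℝ | x * r ≤ 1 + ε}), hslice1, hslice2]
      rw [← ENNReal.ofReal_mul hq.le, mul_one,
        ← ENNReal.ofReal_add hp.le (by positivity)]
    rw [hLHS]
    -- RHS lower bound
    have hSm : MeasurableSet {ω : Ω | Y ω * R ω ≤ 1 + ε} :=
      measurableSet_le (hYm.mul hRm) measurable_const
    have hcompl : ℙ {ω : Ω | Y ω * R ω ≤ 1 + ε}
        = 1 - ℙ {ω : Ω | 1 + ε < Y ω * R ω} := by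
      have hs : {ω : Ω | 1 + ε < Y ω * R ω} = {ω : Ω | Y ω * R ω ≤ 1 + ε}ᶜ := by
        ext ω; simp [not_le]
      rw [hs, measure_compl hSm (measure_ne_top _ _), measure_univ]
      rw [ENNReal.sub_sub_cancel ENNReal.one_ne_top (prob_le_one)]
    rw [hcompl]
    -- bound the tail
    have htail : ℙ {ω : Ω | 1 + ε < Y ω * R ω}
        ≤ ENNReal.ofReal (lam * ((1 - w₁) ^ 2 + α ^ 2)) := by
      have hTm : MeasurableSet {z : ℝ × ℝ | 1 + ε < z.1 * z.2} :=
        measurableSet_lt measurable_const (measurable_fst.mul measurable_snd)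
      have hmap : ℙ {ω : Ω | 1 + ε < Y ω * R ω}
          = ((Measure.map Y ℙ).prod ν) {z : ℝ × ℝ | 1 + ε < z.1 * z.2} := by
        rw [← hR, ← (indepFun_iff_map_prod_eq_prod_map_map hYm.aemeasurable
          hRm.aemeasurable).1 hindep,
          Measure.map_apply (hYm.prodMk hRm) hTm]
        rfl
      rw [hmap, Measure.prod_apply hTm]
      have hpt : ∀ y : ℝ, ν (Prod.mk y ⁻¹' {z : ℝ × ℝ | 1 + ε < z.1 * z.2})
          ≤ ENNReal.ofReal (lam * (y - w₁) ^ 2) := by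
        intro y
        have hpre : (Prod.mk y ⁻¹' {z : ℝ × ℝ | 1 + ε < z.1 * z.2}) = {r : ℝ | 1 + ε < y * r} := rfl
        rw [hpre]
        rcases le_or_gt y 1 with hy | hy
        · have : {r : ℝ | 1 + ε < y * r} ∩ Set.Icc (1 - ε) (1 + ε) = ∅ := by
            ext r
            simp only [Set.mem_inter_iff, Set.mem_setOf_eq, Set.mem_Icc, Set.mem_empty_iff_false,
              iff_false, not_and, and_imp]
            intro h1 h2 h3
            rcases le_total y 0 with h | h
            · nlinarith
            · nlinarith
          rw [hν, uniformIcc_apply, this]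
          simp
        · rcases le_total ((1 + ε) * (y - 1) / (2 * ε * y)) 1 with hc | hc
          · have hkey' := hkey y hy
            rw [min_eq_right hc] at hkey'
            have hsub : {r : ℝ | 1 + ε < y * r} ∩ Set.Icc (1 - ε) (1 + ε)
                ⊆ Set.Icc ((1 + ε) / y) (1 + ε) := by
              intro r hr
              obtain ⟨h1, h2, h3⟩ := hr
              simp only [Set.mem_setOf_eq] at h1
              refine ⟨?_, h3⟩
              rw [div_le_iff₀ (by linarith : (0:ℝ) < y)]
              nlinarith
            calc ν {r : ℝ | 1 + ε < y * r}
                ≤ (ENNReal.ofReal (2 * ε))⁻¹ * volume (Set.Icc ((1 + ε) / y) (1 + ε)) := by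
                  rw [hν, uniformIcc_apply]
                  rw [show (1 + ε - (1 - ε)) = 2 * ε by ring]
                  exact mul_le_mul_right (measure_mono hsub) _
              _ = ENNReal.ofReal ((1 + ε - (1 + ε) / y) / (2 * ε)) := by
                  rw [Real.volume_Icc, ENNReal.ofReal_div_of_pos h2ε, ENNReal.div_eq_inv_mul]
              _ ≤ ENNReal.ofReal (lam * (y - w₁) ^ 2) := by
                  apply ENNReal.ofReal_le_ofReal
                  have heq : (1 + ε - (1 + ε) / y) / (2 * ε) = (1 + ε) * (y - 1) / (2 * ε * y) := by
                    field_simp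
                  rw [heq]; exact hkey'
          · have hkey' := hkey y hy
            rw [min_eq_left hc] at hkey'
            calc ν {r : ℝ | 1 + ε < y * r} ≤ 1 := prob_le_one
              _ = ENNReal.ofReal 1 := by simp
              _ ≤ ENNReal.ofReal (lam * (y - w₁) ^ 2) := ENNReal.ofReal_le_ofReal hkey'
      calc ∫⁻ y, ν (Prod.mk y ⁻¹' {z : ℝ × ℝ | 1 + ε < z.1 * z.2}) ∂(Measure.map Y ℙ)
          ≤ ∫⁻ y, ENNReal.ofReal (lam * (y - w₁) ^ 2) ∂(Measure.map Y ℙ) :=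
            lintegral_mono fun y => hpt y
        _ = ENNReal.ofReal (∫ y, lam * (y - w₁) ^ 2 ∂(Measure.map Y ℙ)) := by
            rw [ofReal_integral_eq_lintegral_ofReal]
            · have hm : Measurable fun y : ℝ => lam * (y - w₁) ^ 2 := by fun_prop
              rw [integrable_map_measure hm.aestronglyMeasurable hYm.aemeasurable]
              have h1 : Integrable (fun ω => (Y ω - w₁) ^ 2) ℙ :=
                (hY2.sub (memLp_const w₁)).integrable_sq
              exact h1.const_mul lam
            · filter_upwards with y; positivity
        _ ≤ ENNReal.ofReal (lam * ((1 - w₁) ^ 2 + α ^ 2)) := by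
            apply ENNReal.ofReal_le_ofReal
            have hint : ∫ y, lam * (y - w₁) ^ 2 ∂(Measure.map Y ℙ)
                = lam * ∫ ω, (Y ω - w₁) ^ 2 ∂ℙ := by
              have hm : Measurable fun y : ℝ => lam * (y - w₁) ^ 2 := by fun_prop
              rw [integral_map hYm.aemeasurable hm.aestronglyMeasurable]
              exact integral_const_mul lam _
            rw [hint]
            have hYsq : Integrable (fun ω => Y ω ^ 2) ℙ := hY2.integrable_sq
            have hY1 : Integrable Y ℙ := hY2.integrable one_le_two
            have hexp : ∫ ω, (Y ω - w₁) ^ 2 ∂ℙ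
                = ∫ ω, Y ω ^ 2 ∂ℙ - 2 * w₁ + w₁ ^ 2 := by
              have : (fun ω => (Y ω - w₁) ^ 2)
                  = fun ω => Y ω ^ 2 - (2 * w₁) * Y ω + w₁ ^ 2 := by
                funext ω; ring
              have hI1 : Integrable (fun ω => Y ω ^ 2 - 2 * w₁ * Y ω) ℙ :=
                hYsq.sub (hY1.const_mul (2 * w₁))
              have hI2 : Integrable (fun ω => 2 * w₁ * Y ω) ℙ := hY1.const_mul (2 * w₁)
              rw [this, integral_add hI1 (integrable_const _),
                integral_sub hYsq hI2, integral_const_mul, hmean]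
              simp [measure_univ]
            have hvarY : ∫ ω, Y ω ^ 2 ∂ℙ = variance Y ℙ + 1 := by
              have := variance_eq_sub hY2
              have hpow : ∫ ω, (Y ^ 2) ω ∂ℙ = ∫ ω, Y ω ^ 2 ∂ℙ := by
                apply integral_congr_ae; filter_upwards with ω; simp
              rw [hpow] at this
              rw [hmean] at this
              linarith
            have hvle : variance Y ℙ ≤ α ^ 2 := by
              have h0 := variance_nonneg Y ℙ
              nlinarith [Real.sq_sqrt h0, Real.sqrt_nonneg (variance Y ℙ)]
            rw [hexp, hvarY]
            nlinarith
    -- combine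
    refine ENNReal.le_sub_of_add_le_right (measure_ne_top _ _) ?_
    calc ENNReal.ofReal (p + q * (((1 + ε) / w₂ - (1 - ε)) / (2 * ε)))
          + ℙ {ω : Ω | 1 + ε < Y ω * R ω}
        ≤ ENNReal.ofReal (p + q * (((1 + ε) / w₂ - (1 - ε)) / (2 * ε)))
          + ENNReal.ofReal (lam * ((1 - w₁) ^ 2 + α ^ 2)) := by
          exact add_le_add_right htail _
      _ = 1 := by
          rw [← ENNReal.ofReal_add (by positivity) (by positivity), hbal,
            ENNReal.ofReal_one]

/-- For `ε ∈ (0,1)`, `α > 0`, `Y` square-integrable with mean 1 and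
standard deviation at most `α`, and `R` uniform on `[1−ε,1+ε]` independent of `Y`,
there exists a two-valued random variable `W` with mean 1, standard deviation exactly
`α`, independent of a uniform `R′` on `[1−ε,1+ε]`, with
`P(WR′ ≤ 1+ε) ≤ P(YR ≤ 1+ε)`. -/
theorem two_point_worst_case {Ω : Type*} [MeasureSpace Ω]
    [IsProbabilityMeasure (ℙ : Measure Ω)]
    (ε α : ℝ) (hε : ε ∈ Set.Ioo (0 : ℝ) 1) (hα : 0 < α)
    (Y R : Ω → ℝ) (hYm : Measurable Y) (hRm : Measurable R)
    (hY2 : MemLp Y 2 ℙ)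
    (hmean : ∫ ω, Y ω ∂ℙ = 1)
    (hsd : Real.sqrt (variance Y ℙ) ≤ α)
    (hR : Measure.map R ℙ = uniformIcc (1 - ε) (1 + ε))
    (hindep : IndepFun Y R ℙ) :
    ∃ (Ω' : Type) (_ : MeasureSpace Ω'),
      IsProbabilityMeasure (ℙ : Measure Ω') ∧
      ∃ W R' : Ω' → ℝ,
        Measurable W ∧ Measurable R' ∧
        Measure.map R' (ℙ : Measure Ω') = uniformIcc (1 - ε) (1 + ε) ∧
        IndepFun W R' ℙ ∧
        (∃ w₁ w₂ : ℝ, w₁ ≠ w₂ ∧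
          (ℙ : Measure Ω') {ω | W ω = w₁ ∨ W ω = w₂} = 1 ∧
          (ℙ : Measure Ω') {ω | W ω = w₁} ≠ 0 ∧
          (ℙ : Measure Ω') {ω | W ω = w₂} ≠ 0) ∧
        (∫ ω, W ω ∂(ℙ : Measure Ω')) = 1 ∧
        Real.sqrt (variance W (ℙ : Measure Ω')) = α ∧
        (ℙ : Measure Ω') {ω | W ω * R' ω ≤ 1 + ε} ≤ ℙ {ω | Y ω * R ω ≤ 1 + ε} := by
  obtain ⟨hε0, hε1⟩ := hε
  have h1ε : (0:ℝ) < 1 - ε := by linarith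
  have hεne : ε ≠ 0 := ne_of_gt hε0
  obtain ⟨c, hc⟩ : ∃ c : ℝ, c * (1 - ε) = 1 + ε :=
    ⟨(1 + ε) / (1 - ε), div_mul_cancel₀ _ h1ε.ne'⟩
  obtain ⟨β, hβ⟩ : ∃ β : ℝ, β * (1 - ε) = 2 * ε :=
    ⟨2 * ε / (1 - ε), div_mul_cancel₀ _ h1ε.ne'⟩
  have hc1 : 1 < c := by nlinarith
  have hβ0 : 0 < β := by nlinarith
  have hcβ : c - 1 = β := by
    have h : (c - 1) * (1 - ε) = β * (1 - ε) := by linear_combination hc - hβ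
    exact mul_right_cancel₀ h1ε.ne' h
  have hcval0 : c = 1 + β := by linarith
  have hr2 : (1 + ε) * (c - 1) = 2 * ε * c := by
    rw [hcval0]; linear_combination hβ
  rcases le_or_gt (α ^ 2) ((c - 1) ^ 2 * (2 * c - 1)) with hcase | hcase
  · -- small alpha: tangency at s ∈ (1, c]
    have hcont : ContinuousOn (fun s : ℝ => (s - 1) ^ 2 * (2 * s - 1)) (Set.Icc 1 c) := by
      fun_prop
    have hIVT := intermediate_value_Icc hc1.le hcont
    have hmem : α ^ 2 ∈ Set.Icc (((1:ℝ) - 1) ^ 2 * (2 * 1 - 1)) ((c - 1) ^ 2 * (2 * c - 1)) := by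
      rw [Set.mem_Icc]
      constructor
      · norm_num
        positivity
      · exact hcase
    obtain ⟨s, hsmem, hseq⟩ := hIVT hmem
    obtain ⟨hs1, hsc⟩ := hsmem
    simp only at hseq
    have hs1' : 1 < s := by
      rcases lt_or_eq_of_le hs1 with h | h
      · exact h
      · exfalso; rw [← h] at hseq; simp at hseq; nlinarith
    have hs0 : 0 < s := by linarith
    have hsne : s ≠ 0 := ne_of_gt hs0
    have hs1ne : s - 1 ≠ 0 := by intro h; nlinarith
    have hs3 : (0:ℝ) < 4 * s ^ 3 * (s - 1) := by
      have := pow_pos hs0 3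
      nlinarith
    have hlam0 : (0:ℝ) < (1 + ε) / (2 * ε * (4 * s ^ 3 * (s - 1))) :=
      div_pos (by linarith) (mul_pos (by linarith) hs3)
    refine construction ε α ⟨hε0, hε1⟩ hα Y R hYm hRm hY2 hmean hsd hR hindep
      (3 * s - 2 * s ^ 2) s (1 / (2 * s)) ((2 * s - 1) / (2 * s))
      ((1 + ε) / (2 * ε * (4 * s ^ 3 * (s - 1))))
      (by nlinarith [mul_pos (by linarith : (0:ℝ) < 2 * s - 1) (by linarith : (0:ℝ) < s - 1)])
      hs1'
      (by nlinarith [mul_le_mul_of_nonneg_right hsc h1ε.le])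
      (div_pos one_pos (by linarith))
      (div_pos (by linarith) (by linarith))
      (by field_simp; ring)
      (by field_simp; ring)
      ?_ hlam0 ?_ ?_
    · -- variance
      have hv : 1 / (2 * s) * (3 * s - 2 * s ^ 2 - 1) ^ 2 + (2 * s - 1) / (2 * s) * (s - 1) ^ 2
          = (s - 1) ^ 2 * (2 * s - 1) := by
        field_simp
        ring
      rw [hv, hseq]
    · -- hkey
      intro y hy
      refine le_trans (min_le_right _ _) ?_
      rw [div_le_iff₀ (by positivity)]
      have hid : (1 + ε) / (2 * ε * (4 * s ^ 3 * (s - 1))) * (y - (3 * s - 2 * s ^ 2)) ^ 2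
            * (2 * ε * y) - (1 + ε) * (y - 1)
          = (1 + ε) / (4 * s ^ 3 * (s - 1)) * ((y - s) ^ 2 * (y + 4 * s * (s - 1))) := by
        field_simp
        ring
      have hpos : 0 ≤ (1 + ε) / (4 * s ^ 3 * (s - 1)) * ((y - s) ^ 2 * (y + 4 * s * (s - 1))) := by
        apply mul_nonneg (le_of_lt (div_pos (by linarith) hs3))
        exact mul_nonneg (sq_nonneg _) (by nlinarith)
      linarith [hid, hpos]
    · -- balance
      rw [← hseq]
      field_simp
      ring
  · -- large alpha: w₂ = c
    have hden : (0:ℝ) < α ^ 2 + β ^ 2 := by positivity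
    have hdenne : α ^ 2 + β ^ 2 ≠ 0 := ne_of_gt hden
    have hβne : β ≠ 0 := ne_of_gt hβ0
    have hcval : c = 1 + β := by linarith
    have hcase2 : β ^ 2 * (2 * c - 1) < α ^ 2 := by
      have h : (c - 1) ^ 2 = β ^ 2 := by rw [hcβ]
      nlinarith [hcase, h]
    refine construction ε α ⟨hε0, hε1⟩ hα Y R hYm hRm hY2 hmean hsd hR hindep
      (1 - α ^ 2 / β) c (β ^ 2 / (α ^ 2 + β ^ 2)) (α ^ 2 / (α ^ 2 + β ^ 2))
      (β ^ 2 / (α ^ 2 + β ^ 2) ^ 2)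
      (by nlinarith [div_pos (by positivity : (0:ℝ) < α ^ 2) hβ0])
      hc1 hc.le
      (div_pos (pow_pos hβ0 2) hden)
      (div_pos (by positivity) hden)
      (by rw [← add_div, add_comm]; exact div_self hdenne)
      (by rw [hcval]; field_simp; ring)
      (by rw [hcval]; field_simp; ring)
      (div_pos (pow_pos hβ0 2) (pow_pos hden 2))
      ?_ ?_
    · -- hkey
      intro y hy
      set w₁ : ℝ := 1 - α ^ 2 / β with hw₁def
      set lam : ℝ := β ^ 2 / (α ^ 2 + β ^ 2) ^ 2 with hlamdef
      have hlam0 : 0 < lam := div_pos (pow_pos hβ0 2) (pow_pos hden 2)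
      have hw1r : (1 - w₁) * β = α ^ 2 := by
        rw [hw₁def, show (1 - (1 - α ^ 2 / β)) = α ^ 2 / β from by ring,
          div_mul_cancel₀ _ hβne]
      have hlamr : lam * (α ^ 2 + β ^ 2) ^ 2 = β ^ 2 := by
        rw [hlamdef, div_mul_cancel₀ _ (pow_ne_zero 2 hdenne)]
      have hcw : (c - w₁) * β = α ^ 2 + β ^ 2 := by
        linear_combination hw1r + β * hcβ
      have hcw0 : 0 < c - w₁ := by nlinarith
      have h2 : (c - w₁) ^ 2 * β ^ 2 = (α ^ 2 + β ^ 2) ^ 2 := by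
        linear_combination ((c - w₁) * β + (α ^ 2 + β ^ 2)) * hcw
      have hr1 : lam * (c - w₁) ^ 2 = 1 := by
        have h5 : (lam * (c - w₁) ^ 2) * β ^ 2 = 1 * β ^ 2 := by
          linear_combination lam * h2 + hlamr
        exact mul_right_cancel₀ (pow_ne_zero 2 hβne) h5
      have hzero : 2 * c * β * ((1 - ε) * β - 2 * ε) = 0 := by
        have : (1 - ε) * β - 2 * ε = 0 := by linear_combination hβ
        rw [this]; ring
      have h4' : 4 * ε * c * β ≤ (1 - ε) * (c - w₁) * β := by
        nlinarith [hcw, hzero, mul_le_mul_of_nonneg_left hcase2.le h1ε.le]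
      have h4 : 4 * ε * c ≤ (1 - ε) * (c - w₁) := by
        have h := le_of_mul_le_mul_right h4' hβ0
        linarith
      have hD2 : 2 * ε * lam * ((c - w₁) ^ 2 + 2 * c * (c - w₁)) ≤ 1 + ε := by
        nlinarith [mul_le_mul_of_nonneg_left h4 (mul_nonneg hlam0.le hcw0.le), hr1]
      rcases le_or_gt y c with hyc | hyc
      · refine le_trans (min_le_right _ _) ?_
        rw [div_le_iff₀ (by positivity)]
        have hid : lam * (y - w₁) ^ 2 * (2 * ε * y) - (1 + ε) * (y - 1)
            = 2 * ε * lam * (y - c) ^ 2 * (y + 2 * (c - w₁))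
              + (2 * ε * lam * ((c - w₁) ^ 2 + 2 * c * (c - w₁)) - (1 + ε)) * (y - c)
              + (2 * ε * c * (lam * (c - w₁) ^ 2) - (1 + ε) * (c - 1)) := by
          ring
        have h1 : 0 ≤ 2 * ε * lam * (y - c) ^ 2 * (y + 2 * (c - w₁)) := by
          apply mul_nonneg (mul_nonneg (by positivity) (sq_nonneg _))
          nlinarith
        have h2' : 0 ≤ (2 * ε * lam * ((c - w₁) ^ 2 + 2 * c * (c - w₁)) - (1 + ε)) * (y - c) := by
          nlinarith [mul_nonneg (by linarith : (0:ℝ) ≤ (1 + ε) - 2 * ε * lam * ((c - w₁) ^ 2 + 2 * c * (c - w₁))) (by linarith : (0:ℝ) ≤ c - y)]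
        have h3 : 2 * ε * c * (lam * (c - w₁) ^ 2) - (1 + ε) * (c - 1) = 0 := by
          rw [hr1, hr2]; ring
        linarith [hid, h1, h2', h3]
      · refine le_trans (min_le_left _ _) ?_
        have hyw : (c - w₁) ^ 2 ≤ (y - w₁) ^ 2 := by nlinarith
        nlinarith [mul_le_mul_of_nonneg_left hyw hlam0.le, hr1]
    · -- balance
      have hcne : c ≠ 0 := by positivity
      have hmid : (1 + ε) / c - (1 - ε) = 0 := by
        field_simp
        linear_combination -hc
      rw [hmid, zero_div, mul_zero, add_zero]
      field_simp
      ring
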